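/- Fix T ≥ 2 and let s = T + 1 − √(4T + 1). Then 0 ≤ s ≤ T and s satisfies (T − s) + (1/2)(T − s)² = 2T; equivalently, with a safety net of R = T units, s equalizes the two worst-case competitive ratios (R − s + T − s)/(R + T) and (R − s + T − s)/(R − s + (1/2)(T − s)²). -/
import Mathlib


theorem stmt13 (T : ℝ) (hT : 2 ≤ T) (s : ℝ)
    (hs : s = T + 1 - Real.sqrt (4 * T + 1)) :
    (0 ≤ s ∧ s ≤ T) ∧ (T - s) + (1 / 2) * (T - s) ^ 2 = 2 * T ∧
    (T - s + (T - s)) / (T + T) =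
      (T - s + (T - s)) / (T - s + (1 / 2) * (T - s) ^ 2) := by
  have h0 : (0:ℝ) ≤ 4 * T + 1 := by linarith
  have hr0 : 0 ≤ Real.sqrt (4 * T + 1) := Real.sqrt_nonneg _
  have hr2 : Real.sqrt (4 * T + 1) ^ 2 = 4 * T + 1 := Real.sq_sqrt h0
  have heq : (T - s) + (1 / 2) * (T - s) ^ 2 = 2 * T := by
    subst hs; nlinarith [hr2]
  refine ⟨⟨?_, ?_⟩, heq, ?_⟩
  · subst hs; nlinarith [hr2, hr0]
  · subst hs; nlinarith [hr2, hr0]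
  · rw [heq]; ring_nf
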